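/- arXiv:2304.03310 — 5 statements merged into one kernel-verified Lean document; each statement's English description precedes it below -/
import Mathlib

section
/- Let r, s ∈ ℤ and M ≥ 1, and define G(r,s,2M) = ∑_{x=0}^{2M−1} exp(2πi(rx²+sx)/(2M)) and G̃(r,s,M) = ∑_{x=0}^{M−1} exp(πi(rx²+sx)/M). Then G(r,s,2M) = (1 + (−1)^{Mr+s})·G̃(r,s,M). In particular G(r,s,2M) = 0 whenever Mr + s is odd. -/
theorem stmt9 (r s : ℤ) (M : ℕ) (hM : 1 ≤ M) :
    (∑ x ∈ Finset.range (2 * M),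
        Complex.exp (2 * Real.pi * Complex.I *
          ((r : ℂ) * (x : ℂ) ^ 2 + (s : ℂ) * (x : ℂ)) / (2 * M))) =
      (1 + (-1 : ℂ) ^ ((M : ℤ) * r + s)) *
        ∑ x ∈ Finset.range M,
          Complex.exp (Real.pi * Complex.I *
            ((r : ℂ) * (x : ℂ) ^ 2 + (s : ℂ) * (x : ℂ)) / M) ∧
    (Odd ((M : ℤ) * r + s) →
      (∑ x ∈ Finset.range (2 * M),
        Complex.exp (2 * Real.pi * Complex.I *
          ((r : ℂ) * (x : ℂ) ^ 2 + (s : ℂ) * (x : ℂ)) / (2 * M))) = 0) := by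
  have hMc : (M : ℂ) ≠ 0 := by
    exact_mod_cast Nat.cast_ne_zero.mpr (by omega)
  have main :
      (∑ x ∈ Finset.range (2 * M),
        Complex.exp (2 * Real.pi * Complex.I *
          ((r : ℂ) * (x : ℂ) ^ 2 + (s : ℂ) * (x : ℂ)) / (2 * M))) =
      (1 + (-1 : ℂ) ^ ((M : ℤ) * r + s)) *
        ∑ x ∈ Finset.range M,
          Complex.exp (Real.pi * Complex.I *
            ((r : ℂ) * (x : ℂ) ^ 2 + (s : ℂ) * (x : ℂ)) / M) := by
    have hexp : ∀ x : ℕ,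
        2 * (Real.pi : ℂ) * Complex.I * ((r : ℂ) * (x : ℂ) ^ 2 + (s : ℂ) * (x : ℂ)) / (2 * M)
          = (Real.pi : ℂ) * Complex.I * ((r : ℂ) * (x : ℂ) ^ 2 + (s : ℂ) * (x : ℂ)) / M := by
      intro x; field_simp
    simp only [hexp]
    rw [two_mul, Finset.sum_range_add, Finset.mul_sum, ← Finset.sum_add_distrib]
    refine Finset.sum_congr rfl fun y _ => ?_
    have hsplit :
        (Real.pi : ℂ) * Complex.I * ((r : ℂ) * ((M + y : ℕ) : ℂ) ^ 2 + (s : ℂ) * ((M + y : ℕ) : ℂ)) / M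
          = (Real.pi : ℂ) * Complex.I * ((r : ℂ) * (y : ℂ) ^ 2 + (s : ℂ) * (y : ℂ)) / M
            + (((M : ℤ) * r + s : ℤ) : ℂ) * ((Real.pi : ℂ) * Complex.I)
            + ((r * (y : ℤ) : ℤ) : ℂ) * (2 * (Real.pi : ℂ) * Complex.I) := by
      push_cast
      field_simp
      ring
    rw [hsplit, Complex.exp_add, Complex.exp_add, Complex.exp_int_mul,
      Complex.exp_int_mul, Complex.exp_pi_mul_I]
    have h2pi : Complex.exp (2 * (Real.pi : ℂ) * Complex.I) = 1 := by
      simp [Complex.exp_two_pi_mul_I]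
    rw [h2pi, one_zpow, mul_one]
    ring
  refine ⟨main, fun hodd => ?_⟩
  rw [main, Odd.neg_one_zpow hodd]
  ring
end

section
/- Let N be an odd positive integer and r an integer with gcd(r,N) = 1. Then |G(r,0,N)|² = N, where G(r,0,N) = ∑_{x=0}^{N−1} exp(2πi·r·x²/N). That is, the absolute value of the quadratic Gauss sum with invertible coefficient and odd modulus is √N. -/
open Complex Finset

noncomputable def ee (N : ℕ) (k : ℤ) : ℂ := Complex.exp (2 * Real.pi * Complex.I * k / N)

lemma ee_add (N : ℕ) (a b : ℤ) : ee N (a + b) = ee N a * ee N b := by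
  rw [ee, ee, ee, ← Complex.exp_add]
  congr 1
  push_cast
  ring

lemma ee_int_mul (N : ℕ) (hN : 0 < N) (m : ℤ) : ee N ((N : ℤ) * m) = 1 := by
  have hNC : (N : ℂ) ≠ 0 := Nat.cast_ne_zero.mpr hN.ne'
  rw [ee]
  have h : 2 * (Real.pi : ℂ) * Complex.I * (((N : ℤ) * m : ℤ) : ℂ) / N
      = (m : ℂ) * (2 * Real.pi * Complex.I) := by
    push_cast
    field_simp
  rw [h, Complex.exp_int_mul_two_pi_mul_I]

lemma ee_congr (N : ℕ) (hN : 0 < N) {a b : ℤ} (h : (a : ZMod N) = (b : ZMod N)) :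
    ee N a = ee N b := by
  have hmod : a ≡ b [ZMOD N] := (ZMod.intCast_eq_intCast_iff _ _ _).mp h
  obtain ⟨k, hk⟩ := Int.ModEq.dvd hmod
  have : b = a + (N : ℤ) * k := by linarith
  rw [this, ee_add, ee_int_mul N hN, mul_one]

lemma ee_pow (N : ℕ) (a : ℤ) (x : ℕ) : ee N (a * x) = (ee N a) ^ x := by
  rw [ee, ee, ← Complex.exp_nat_mul]
  congr 1
  push_cast
  ring

lemma ee_geom (N : ℕ) [NeZero N] (hN : 0 < N) (a : ℤ) :
    ∑ w : ZMod N, ee N (a * (w.val : ℤ)) = if (N : ℤ) ∣ a then (N : ℂ) else 0 := by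
  by_cases hdvd : (N : ℤ) ∣ a
  · obtain ⟨m, rfl⟩ := hdvd
    rw [if_pos (Dvd.intro m rfl)]
    have : ∀ w : ZMod N, ee N ((N : ℤ) * m * (w.val : ℤ)) = 1 := by
      intro w
      rw [mul_assoc, ee_int_mul N hN]
    simp only [this, Finset.sum_const, Finset.card_univ, ZMod.card, nsmul_eq_mul, mul_one]
  · rw [if_neg hdvd]
    set ζ := ee N a with hζ
    have hsum : ∑ w : ZMod N, ee N (a * (w.val : ℤ)) = ∑ i ∈ Finset.range N, ζ ^ i := by
      rw [Finset.sum_nbij' (i := fun w => w.val) (j := fun i => ((i : ℕ) : ZMod N))]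
      · intro w _; exact Finset.mem_range.mpr (ZMod.val_lt w)
      · intro i _; exact Finset.mem_univ _
      · intro w _; simp [ZMod.natCast_val, ZMod.cast_id]
      · intro i hi; exact ZMod.val_cast_of_lt (Finset.mem_range.mp hi)
      · intro w _
        rw [show a * (w.val : ℤ) = a * ((w.val : ℕ) : ℤ) by ring, ee_pow]
    have hζ1 : ζ ≠ 1 := by
      intro h
      apply hdvd
      rw [hζ, ee] at h
      obtain ⟨n, hn⟩ := Complex.exp_eq_one_iff.mp h
      have hNC : (N : ℂ) ≠ 0 := Nat.cast_ne_zero.mpr hN.ne'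
      have h2pi : (2 : ℂ) * Real.pi * Complex.I ≠ 0 :=
        mul_ne_zero (mul_ne_zero two_ne_zero
          (Complex.ofReal_ne_zero.mpr Real.pi_ne_zero)) Complex.I_ne_zero
      have : (a : ℂ) = (n : ℂ) * N := by
        rw [div_eq_iff hNC] at hn
        apply mul_left_cancel₀ h2pi
        linear_combination hn
      have : a = n * N := by exact_mod_cast this
      exact ⟨n, by linarith⟩
    have hζN : ζ ^ N = 1 := by
      rw [hζ, ← ee_pow, ee]
      have : 2 * (Real.pi : ℂ) * Complex.I * ((a * (N : ℕ) : ℤ) : ℂ) / N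
          = (a : ℂ) * (2 * Real.pi * Complex.I) := by
        have hNC : (N : ℂ) ≠ 0 := Nat.cast_ne_zero.mpr hN.ne'
        push_cast
        field_simp
      rw [this, Complex.exp_int_mul_two_pi_mul_I]
    rw [hsum, geom_sum_eq hζ1, hζN, sub_self, zero_div]

lemma ee_conj (N : ℕ) (k : ℤ) : (starRingEnd ℂ) (ee N k) = ee N (-k) := by
  rw [ee, ee, ← Complex.exp_conj]
  congr 1
  simp [map_div₀, Complex.conj_I, map_ofNat]
  try ring

theorem stmt11 (N : ℕ) (hN : 1 ≤ N) (hodd : Odd N) (r : ℤ) (hr : Int.gcd r N = 1) :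
    ‖∑ x ∈ Finset.range N,
        Complex.exp (2 * Real.pi * Complex.I * (r : ℂ) * (x : ℂ) ^ 2 / N)‖ ^ 2
      = (N : ℝ) := by
  have hN0 : 0 < N := hN
  haveI : NeZero N := ⟨hN0.ne'⟩
  set S : ℂ := ∑ x ∈ Finset.range N,
      Complex.exp (2 * Real.pi * Complex.I * (r : ℂ) * (x : ℂ) ^ 2 / N) with hS
  -- rewrite S as a sum over ZMod N
  have h1 : S = ∑ z : ZMod N, ee N (r * (z.val : ℤ) ^ 2) := by
    rw [hS]
    rw [Finset.sum_nbij' (i := fun x => ((x : ℕ) : ZMod N)) (j := fun z => z.val)]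
    · intro x _; exact Finset.mem_univ _
    · intro z _; exact Finset.mem_range.mpr (ZMod.val_lt z)
    · intro x hx; exact ZMod.val_cast_of_lt (Finset.mem_range.mp hx)
    · intro z _; simp [ZMod.natCast_val, ZMod.cast_id]
    · intro x hx
      rw [ee]
      congr 1
      rw [ZMod.val_cast_of_lt (Finset.mem_range.mp hx)]
      push_cast
      ring
  -- coprimality: N coprime to 2r
  have hcop : IsCoprime ((N : ℤ)) (2 * r) := by
    have h2 : IsCoprime ((N : ℤ)) 2 := by
      rw [Int.isCoprime_iff_gcd_eq_one]
      have : Nat.Coprime 2 N := Nat.coprime_two_left.mpr hodd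
      simpa [Int.gcd, Nat.coprime_comm] using this.symm
    have hrr : IsCoprime ((N : ℤ)) r := by
      rw [Int.isCoprime_iff_gcd_eq_one, Int.gcd_comm]
      exact hr
    exact h2.mul_right hrr
  -- key computation: conj S * S = N
  have hkey : (starRingEnd ℂ) S * S = (N : ℂ) := by
    have hconjS : (starRingEnd ℂ) S = ∑ w : ZMod N, ee N (-(r * (w.val : ℤ) ^ 2)) := by
      rw [h1, map_sum]
      exact Finset.sum_congr rfl fun w _ => ee_conj N _
    rw [hconjS, h1, Finset.sum_mul_sum]
    have step1 : ∀ w z : ZMod N,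
        ee N (-(r * (w.val : ℤ) ^ 2)) * ee N (r * (z.val : ℤ) ^ 2)
          = ee N (r * (z.val : ℤ) ^ 2 - r * (w.val : ℤ) ^ 2) := by
      intro w z
      rw [← ee_add]
      congr 1
      ring
    calc ∑ w : ZMod N, ∑ z : ZMod N,
          ee N (-(r * (w.val : ℤ) ^ 2)) * ee N (r * (z.val : ℤ) ^ 2)
        = ∑ w : ZMod N, ∑ t : ZMod N,
            ee N (r * (((w + t).val : ℤ)) ^ 2 - r * (w.val : ℤ) ^ 2) := by
          refine Finset.sum_congr rfl fun w _ => ?_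
          rw [show (∑ z : ZMod N, ee N (-(r * (w.val : ℤ) ^ 2)) * ee N (r * (z.val : ℤ) ^ 2))
              = ∑ z : ZMod N, ee N (r * ((z.val : ℤ)) ^ 2 - r * (w.val : ℤ) ^ 2) from
            Finset.sum_congr rfl fun z _ => step1 w z]
          exact (Fintype.sum_equiv (Equiv.addLeft w)
            (fun t => ee N (r * (((w + t).val : ℤ)) ^ 2 - r * (w.val : ℤ) ^ 2))
            (fun z => ee N (r * ((z.val : ℤ)) ^ 2 - r * (w.val : ℤ) ^ 2))
            (fun t => rfl)).symm
      _ = ∑ w : ZMod N, ∑ t : ZMod N,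
            ee N (r * (t.val : ℤ) ^ 2) * ee N (2 * r * (t.val : ℤ) * (w.val : ℤ)) := by
          refine Finset.sum_congr rfl fun w _ => Finset.sum_congr rfl fun t _ => ?_
          rw [← ee_add]
          apply ee_congr N hN0
          push_cast
          simp only [ZMod.natCast_val, ZMod.cast_id]
          ring
      _ = ∑ t : ZMod N, ∑ w : ZMod N,
            ee N (r * (t.val : ℤ) ^ 2) * ee N (2 * r * (t.val : ℤ) * (w.val : ℤ)) :=
          Finset.sum_comm
      _ = ∑ t : ZMod N, ee N (r * (t.val : ℤ) ^ 2) *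
            (if (N : ℤ) ∣ 2 * r * (t.val : ℤ) then (N : ℂ) else 0) := by
          refine Finset.sum_congr rfl fun t _ => ?_
          rw [← Finset.mul_sum, ee_geom N hN0]
      _ = (N : ℂ) := by
          have hcond : ∀ t : ZMod N, ((N : ℤ) ∣ 2 * r * (t.val : ℤ)) ↔ t = 0 := by
            intro t
            constructor
            · intro h
              have hdvd : (N : ℤ) ∣ (t.val : ℤ) := hcop.dvd_of_dvd_mul_left h
              have hnat : N ∣ t.val := by exact_mod_cast hdvd
              have hv0 : t.val = 0 := Nat.eq_zero_of_dvd_of_lt hnat (ZMod.val_lt t)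
              exact (ZMod.val_eq_zero t).mp hv0
            · rintro rfl
              simp [ZMod.val_zero]
          calc ∑ t : ZMod N, ee N (r * (t.val : ℤ) ^ 2) *
                (if (N : ℤ) ∣ 2 * r * (t.val : ℤ) then (N : ℂ) else 0)
              = ∑ t : ZMod N, (if t = 0 then ee N (r * (t.val : ℤ) ^ 2) * (N : ℂ) else 0) := by
                refine Finset.sum_congr rfl fun t _ => ?_
                by_cases ht : t = 0
                · rw [if_pos ((hcond t).mpr ht), if_pos ht]
                · rw [if_neg (fun h => ht ((hcond t).mp h)), if_neg ht, mul_zero]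
            _ = ee N (r * ((0 : ZMod N).val : ℤ) ^ 2) * (N : ℂ) :=
                Finset.sum_ite_eq' Finset.univ (0 : ZMod N)
                  (fun t => ee N (r * (t.val : ℤ) ^ 2) * (N : ℂ)) |>.trans
                  (if_pos (Finset.mem_univ _))
            _ = (N : ℂ) := by
                simp [ZMod.val_zero, ee]
  -- conclude
  have habs : (Complex.normSq S : ℂ) = (N : ℂ) := by
    rw [← Complex.normSq_eq_conj_mul_self] at hkey
    exact hkey
  have : Complex.normSq S = (N : ℝ) := by exact_mod_cast habs
  rw [Complex.sq_norm]
  exact this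
end

section
/- Let D ≥ 2, L = −⌊(D−1)/2⌋, U = ⌊D/2⌋, σ = L + U, and let ρ : ℤ → [L,U] send each integer to its unique representative modulo D in the interval [L,U]. Then for every x ∈ [L,U], the integer x · ρ(σ − 1 − x) equals U² if and only if x = U. -/
theorem stmt13 (D : ℤ) (hD : 2 ≤ D) :
    let L : ℤ := -((D - 1) / 2)
    let U : ℤ := D / 2
    let σ : ℤ := L + U
    let ρ : ℤ → ℤ := fun z => (z - L) % D + L
    ∀ x : ℤ, L ≤ x → x ≤ U →
      (x * ρ (σ - 1 - x) = U ^ 2 ↔ x = U) := by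
  intro L U σ ρ x hxL hxU
  have hL : L = -((D - 1) / 2) := rfl
  have hU : U = D / 2 := rfl
  have hσ : σ = L + U := rfl
  have hρ : ∀ z, ρ z = (z - L) % D + L := fun z => rfl
  have hU1 : 1 ≤ U := by omega
  have hσ01 : σ = 0 ∨ σ = 1 := by omega
  have hUL : U - L = D - 1 := by omega
  constructor
  · intro h
    by_contra hne
    have hx : x ≤ U - 1 := by omega
    have hval : ρ (σ - 1 - x) = σ - 1 - x := by
      rw [hρ]
      have h1 : 0 ≤ σ - 1 - x - L := by omega
      have h2 : σ - 1 - x - L < D := by omega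
      rw [Int.emod_eq_of_lt h1 h2]; ring
    rw [hval] at h
    have hprod : x * (σ - 1 - x) ≤ 0 := by
      rcases lt_trichotomy x 0 with h0 | h0 | h0
      · exact mul_nonpos_of_nonpos_of_nonneg h0.le (by omega)
      · simp [h0]
      · exact mul_nonpos_of_nonneg_of_nonpos h0.le (by omega)
    have hU2 : 0 < U ^ 2 := by positivity
    linarith
  · intro hx
    subst hx
    have hval : ρ (σ - 1 - U) = U := by
      rw [hρ]
      have : σ - 1 - U - L = -1 := by omega
      rw [this]
      have : (-1 : ℤ) % D = D - 1 := by
        rw [show (-1 : ℤ) = (D - 1) + D * (-1) by ring, Int.add_mul_emod_self_left,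
          Int.emod_eq_of_lt (by omega) (by omega)]
      omega
    rw [hval]; ring
end

section
/- Let D ≥ 2, L = −⌊(D−1)/2⌋, U = ⌊D/2⌋, σ = L+U, and ρ : ℤ → [L,U] the reduction mod D into [L,U]. Then for every m ≥ 1 and every tuple (x_1,…,x_m) ∈ [L,U]^m, the integer product ∏_{j=1}^m ( x_j · ρ(σ − 1 − x_j) ) equals U^{2m} if and only if x_j = U for all j. -/
theorem stmt14 (D : ℤ) (hD : 2 ≤ D) :
    let L : ℤ := -((D - 1) / 2)
    let U : ℤ := D / 2
    let σ : ℤ := L + U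
    let ρ : ℤ → ℤ := fun z => (z - L) % D + L
    ∀ m : ℕ, 1 ≤ m → ∀ x : Fin m → ℤ,
      (∀ j, L ≤ x j ∧ x j ≤ U) →
      ((∏ j, (x j * ρ (σ - 1 - x j))) = U ^ (2 * m) ↔ ∀ j, x j = U) := by
  intro L U σ ρ m hm x hx
  have hLdef : L = -((D - 1) / 2) := rfl
  have hUdef : U = D / 2 := rfl
  have hU1 : 1 ≤ U := by omega
  have hLU : U - L = D - 1 := by omega
  have hmU : -U ≤ L := by omega
  have hρdef : ∀ z, ρ z = (z - L) % D + L := fun z => rfl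
  have hρb : ∀ z, L ≤ ρ z ∧ ρ z ≤ U := by
    intro z
    have h1 := Int.emod_nonneg (z - L) (by omega : D ≠ 0)
    have h2 := Int.emod_lt_of_pos (z - L) (by omega : 0 < D)
    rw [hρdef]; omega
  -- ρ (L - 1) = U
  have hneg1 : (-1 : ℤ) % D = D - 1 := by
    have h1 : ((-1 : ℤ) + D * 1) % D = (-1 : ℤ) % D := Int.add_mul_emod_self_left (-1) D 1
    have h2 : (D - 1) % D = D - 1 := Int.emod_eq_of_lt (by omega) (by omega)
    have h3 : (-1 : ℤ) + D * 1 = D - 1 := by ring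
    rw [h3, h2] at h1; omega
  have hρL1 : ρ (L - 1) = U := by
    rw [hρdef]
    have : L - 1 - L = -1 := by ring
    rw [this, hneg1]; omega
  -- general bound
  have bound : ∀ a : ℤ, L ≤ a → a ≤ U → |a * ρ (σ - 1 - a)| ≤ U ^ 2 := by
    intro a h1 h2
    have hb := hρb (σ - 1 - a)
    have ha : |a| ≤ U := abs_le.mpr ⟨by omega, h2⟩
    have hr : |ρ (σ - 1 - a)| ≤ U := abs_le.mpr ⟨by omega, hb.2⟩
    calc |a * ρ (σ - 1 - a)| = |a| * |ρ (σ - 1 - a)| := abs_mul _ _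
      _ ≤ U * U := mul_le_mul ha hr (abs_nonneg _) (by omega)
      _ = U ^ 2 := by ring
  -- strict bound when a ≠ U
  have key : ∀ a : ℤ, L ≤ a → a ≤ U → a ≠ U → |a * ρ (σ - 1 - a)| < U ^ 2 := by
    intro a h1 h2 h3
    by_cases ha : a = -U
    · have hLeq : L = -U := by omega
      have hσ : σ - 1 - a = U - 1 := by
        have : σ = L + U := rfl
        omega
      have hρU1 : ρ (U - 1) = U - 1 := by
        rw [hρdef]
        have h4 : U - 1 - L = D - 2 := by omega
        have h5 : (D - 2 : ℤ) % D = D - 2 := Int.emod_eq_of_lt (by omega) (by omega)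
        rw [h4, h5]; omega
      rw [hσ, hρU1, ha]
      rw [abs_lt]
      constructor <;> nlinarith
    · have hb := hρb (σ - 1 - a)
      have ha2 : |a| ≤ U - 1 := abs_le.mpr ⟨by omega, by omega⟩
      have hr : |ρ (σ - 1 - a)| ≤ U := abs_le.mpr ⟨by omega, hb.2⟩
      calc |a * ρ (σ - 1 - a)| = |a| * |ρ (σ - 1 - a)| := abs_mul _ _
        _ ≤ (U - 1) * U := mul_le_mul ha2 hr (abs_nonneg _) (by omega)
        _ < U ^ 2 := by nlinarith
  constructor
  · intro h
    by_contra hc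
    push_neg at hc
    obtain ⟨j, hj⟩ := hc
    set f : Fin m → ℤ := fun i => x i * ρ (σ - 1 - x i) with hf
    have hsplit : ∏ i, f i = f j * ∏ i ∈ Finset.univ.erase j, f i :=
      (Finset.mul_prod_erase Finset.univ f (Finset.mem_univ j)).symm
    have hrest : |∏ i ∈ Finset.univ.erase j, f i| ≤ (U ^ 2) ^ (m - 1) := by
      rw [Finset.abs_prod]
      calc ∏ i ∈ Finset.univ.erase j, |f i| ≤ ∏ i ∈ Finset.univ.erase j, U ^ 2 :=
            Finset.prod_le_prod (fun i _ => abs_nonneg _)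
              (fun i _ => bound (x i) (hx i).1 (hx i).2)
        _ = (U ^ 2) ^ (m - 1) := by
            rw [Finset.prod_const, Finset.card_erase_of_mem (Finset.mem_univ j),
              Finset.card_univ, Fintype.card_fin]
    have hfj : |f j| < U ^ 2 := key (x j) (hx j).1 (hx j).2 hj
    have hpos : (0:ℤ) < U ^ 2 := by positivity
    have habs : |∏ i, f i| < (U ^ 2) ^ m := by
      rw [hsplit, abs_mul]
      calc |f j| * |∏ i ∈ Finset.univ.erase j, f i|
          ≤ |f j| * (U ^ 2) ^ (m - 1) :=
            mul_le_mul_of_nonneg_left hrest (abs_nonneg _)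
        _ < U ^ 2 * (U ^ 2) ^ (m - 1) :=
            mul_lt_mul_of_pos_right hfj (by positivity)
        _ = (U ^ 2) ^ m := by
            rw [← pow_succ']
            congr 1
            omega
    rw [h] at habs
    rw [pow_mul] at habs
    rw [abs_of_nonneg (by positivity)] at habs
    exact lt_irrefl _ habs
  · intro h
    have : ∀ j : Fin m, x j * ρ (σ - 1 - x j) = U ^ 2 := by
      intro j
      rw [h j]
      have : σ - 1 - U = L - 1 := by
        have : σ = L + U := rfl
        omega
      rw [this, hρL1]; ring
    rw [Finset.prod_congr rfl (fun j _ => this j), Finset.prod_const,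
      Finset.card_univ, Fintype.card_fin, ← pow_mul, mul_comm]
end

section
/- Let D ≥ 1, ω = exp(2πi/D), τ = exp(πi(D²+1)/D), and for k ∈ ℤ let |ω^k⟩ = (1/√D)·∑_{x=0}^{D−1} ω^{−kx}|x⟩ ∈ ℂ^D. Define Z = ∑_{x=0}^{D−1} ω^x |x⟩⟨x| and, for integers a, b, the operator R(a,b) = (1/√D)·∑_{x=0}^{D−1} τ^{2ax+bx²} |ω^{−x}⟩⟨ω^{x}|. Then for every integer c, Z^c · R(a,b) · Z^c = τ^{−2ac + bc²} · R(a − bc, b). -/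
lemma sum_shift17 {M : Type*} [AddCommMonoid M] (D : ℕ) (f : ℤ → M)
    (hf : ∀ x : ℤ, f (x + D) = f x) (c : ℤ) :
    ∑ x ∈ Finset.range D, f (x + c) = ∑ x ∈ Finset.range D, f x := by
  rcases Nat.eq_zero_or_pos D with h | h
  · simp [h]
  have hDpos : (0 : ℤ) < (D : ℤ) := by exact_mod_cast h
  have hall : ∀ (n : ℤ) (x : ℤ), f (x + (D : ℤ) * n) = f x := by
    intro n
    induction n using Int.induction_on with
    | zero => simp
    | succ k ih =>
        intro x
        calc f (x + (D:ℤ) * ((k:ℤ) + 1)) = f ((x + (D:ℤ) * k) + D) := by ring_nf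
          _ = f (x + (D:ℤ) * k) := hf _
          _ = f x := ih x
    | pred k ih =>
        intro x
        calc f (x + (D:ℤ) * (-(k:ℤ) - 1))
            = f ((x + (D:ℤ) * (-(k:ℤ) - 1)) + D) := (hf _).symm
          _ = f (x + (D:ℤ) * (-(k:ℤ))) := by ring_nf
          _ = f x := ih x
  have hmod : ∀ x : ℤ, f x = f (x % (D : ℤ)) := by
    intro x
    conv_lhs => rw [← Int.emod_add_mul_ediv x (D : ℤ)]
    exact hall (x / (D:ℤ)) (x % (D:ℤ))
  have hkey : ∀ u v : ℤ, 0 ≤ u → u < (D:ℤ) → ((u + v) % (D:ℤ) - v) % (D:ℤ) = u := by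
    intro u v hu huD
    have h1 : ((u + v) % (D:ℤ) - v) % (D:ℤ) = (u + v - v) % (D:ℤ) := by
      conv_rhs => rw [Int.sub_emod]
      rw [Int.sub_emod, Int.emod_emod_of_dvd _ dvd_rfl]
    rw [h1, add_sub_cancel_right]
    exact Int.emod_eq_of_lt hu huD
  refine Finset.sum_nbij' (fun x => ((x + c) % (D:ℤ)).toNat)
    (fun y => (((y : ℤ) - c) % (D:ℤ)).toNat) ?_ ?_ ?_ ?_ ?_
  · intro x hx
    simp only [Finset.mem_range] at *
    have h1 := Int.emod_nonneg ((x:ℤ) + c) (by omega : (D:ℤ) ≠ 0)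
    have h2 := Int.emod_lt_of_pos ((x:ℤ) + c) hDpos
    omega
  · intro y hy
    simp only [Finset.mem_range] at *
    have h1 := Int.emod_nonneg ((y:ℤ) - c) (by omega : (D:ℤ) ≠ 0)
    have h2 := Int.emod_lt_of_pos ((y:ℤ) - c) hDpos
    omega
  · intro x hx
    simp only [Finset.mem_range] at *
    have h1 := Int.emod_nonneg ((x:ℤ) + c) (by omega : (D:ℤ) ≠ 0)
    have h3 := hkey (x:ℤ) c (by omega) (by omega)
    have h4 : ((((x:ℤ) + c) % (D:ℤ)).toNat : ℤ) = ((x:ℤ) + c) % (D:ℤ) :=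
      Int.toNat_of_nonneg h1
    rw [h4] at *
    omega
  · intro y hy
    simp only [Finset.mem_range] at *
    have h1 := Int.emod_nonneg ((y:ℤ) - c) (by omega : (D:ℤ) ≠ 0)
    have h3 := hkey (y:ℤ) (-c) (by omega) (by omega)
    rw [show (y:ℤ) + -c = (y:ℤ) - c by ring, sub_neg_eq_add] at h3
    have h4 : ((((y:ℤ) - c) % (D:ℤ)).toNat : ℤ) = ((y:ℤ) - c) % (D:ℤ) :=
      Int.toNat_of_nonneg h1
    rw [h4] at *
    omega
  · intro x hx
    rw [hmod ((x : ℤ) + c)]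
    congr 1
    rw [Int.toNat_of_nonneg (Int.emod_nonneg _ (by omega))]

theorem stmt17 (D : ℕ) (hD : 1 ≤ D) (a b c : ℤ) :
    let ω : ℂ := Complex.exp (2 * Real.pi * Complex.I / D)
    let τ : ℂ := Complex.exp (Real.pi * Complex.I * ((D : ℂ) ^ 2 + 1) / D)
    -- Fourier basis kets and bras: |ω^k⟩ and ⟨ω^k|
    let ket : ℤ → Fin D → ℂ := fun k x => (1 / (Real.sqrt D : ℂ)) * ω ^ (-(k * ((x : ℕ) : ℤ)))
    let bra : ℤ → Fin D → ℂ := fun k y => (1 / (Real.sqrt D : ℂ)) * ω ^ (k * ((y : ℕ) : ℤ))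
    -- generalized Pauli Z
    let Z : Matrix (Fin D) (Fin D) ℂ := Matrix.diagonal fun x => ω ^ ((x : ℕ) : ℤ)
    -- red dot with stabiliser phase [a;b]
    let R : ℤ → ℤ → Matrix (Fin D) (Fin D) ℂ := fun a b =>
      (1 / (Real.sqrt D : ℂ)) •
        ∑ x ∈ Finset.range D,
          (τ ^ (2 * a * (x : ℤ) + b * (x : ℤ) ^ 2)) •
            Matrix.vecMulVec (ket (-(x : ℤ))) (bra (x : ℤ))
    Z ^ c * R a b * Z ^ c = (τ ^ (-2 * a * c + b * c ^ 2)) • R (a - b * c) b := by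
  intro ω τ ket bra Z R
  have hDne : (D : ℂ) ≠ 0 := Nat.cast_ne_zero.mpr (by omega)
  have hω0 : ω ≠ 0 := Complex.exp_ne_zero _
  have hτ0 : τ ≠ 0 := Complex.exp_ne_zero _
  -- periodicity facts
  have hωD : ω ^ (D : ℤ) = 1 := by
    show Complex.exp _ ^ (D : ℤ) = 1
    rw [← Complex.exp_int_mul]
    rw [show ((D:ℤ):ℂ) * (2 * Real.pi * Complex.I / D) = ((1:ℤ):ℂ) * (2 * Real.pi * Complex.I) by
      push_cast; field_simp]
    exact Complex.exp_int_mul_two_pi_mul_I 1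
  have hτ2D : τ ^ (2 * (D : ℤ)) = 1 := by
    show Complex.exp _ ^ (2 * (D : ℤ)) = 1
    rw [← Complex.exp_int_mul]
    rw [show ((2 * (D:ℤ) : ℤ):ℂ) * (Real.pi * Complex.I * ((D : ℂ) ^ 2 + 1) / D)
        = (((D:ℤ)^2 + 1 : ℤ):ℂ) * (2 * Real.pi * Complex.I) by push_cast; field_simp]
    exact Complex.exp_int_mul_two_pi_mul_I _
  have hτD2 : τ ^ ((D : ℤ) * (D : ℤ)) = 1 := by
    obtain ⟨m, hm⟩ : Even ((D:ℤ) * ((D:ℤ)^2 + 1)) := by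
      rcases Int.even_or_odd (D:ℤ) with h | h
      · exact h.mul_right _
      · refine Even.mul_left ?_ _
        have : Odd ((D:ℤ)^2) := h.pow
        obtain ⟨k, hk⟩ := this
        exact ⟨k + 1, by omega⟩
    have hC : ((D:ℂ) * ((D:ℂ)^2 + 1)) = 2 * (m:ℂ) := by
      have h := congrArg (fun t : ℤ => (t : ℂ)) hm
      push_cast at h
      rw [h]; ring
    show Complex.exp _ ^ ((D:ℤ) * (D:ℤ)) = 1
    rw [← Complex.exp_int_mul]
    rw [show (((D:ℤ) * (D:ℤ) : ℤ):ℂ) * (Real.pi * Complex.I * ((D : ℂ) ^ 2 + 1) / D)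
        = ((m:ℤ):ℂ) * (2 * Real.pi * Complex.I) by
      push_cast
      field_simp
      linear_combination hC]
    exact Complex.exp_int_mul_two_pi_mul_I _
  -- explicit form of Z ^ c
  have hpow : ∀ n : ℕ, Z ^ n = Matrix.diagonal (fun x : Fin D => ω ^ ((n : ℤ) * ((x:ℕ):ℤ))) := by
    intro n
    induction n with
    | zero => simp
    | succ n ih =>
        rw [pow_succ, ih]
        show _ * Matrix.diagonal _ = _
        rw [Matrix.diagonal_mul_diagonal]
        have hfun : (fun i : Fin D => ω ^ ((n:ℤ) * ((i:ℕ):ℤ)) * ω ^ (((i:ℕ):ℤ)))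
            = fun x : Fin D => ω ^ (((n+1 : ℕ):ℤ) * ((x:ℕ):ℤ)) := by
          funext x
          rw [← zpow_add₀ hω0]
          congr 1
          push_cast
          ring
        rw [hfun]
  have hZc : Z ^ c = Matrix.diagonal (fun x : Fin D => ω ^ (c * ((x:ℕ):ℤ))) := by
    rcases c with n | n
    · rw [Int.ofNat_eq_coe, zpow_natCast, hpow]
    · rw [zpow_negSucc, hpow]
      refine Matrix.inv_eq_right_inv ?_
      rw [Matrix.diagonal_mul_diagonal]
      have hfun : (fun x : Fin D =>
          ω ^ (((n+1 : ℕ) : ℤ) * ((x:ℕ):ℤ)) * ω ^ (Int.negSucc n * ((x:ℕ):ℤ)))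
          = fun _ : Fin D => (1:ℂ) := by
        funext x
        rw [← zpow_add₀ hω0, show ((n+1 : ℕ) : ℤ) * ((x:ℕ):ℤ) + Int.negSucc n * ((x:ℕ):ℤ) = 0 by
          rw [Int.negSucc_eq]; push_cast; ring]
        exact zpow_zero ω
      rw [hfun]
      exact Matrix.diagonal_one
  rw [hZc]
  ext i j
  set s : ℂ := 1 / (Real.sqrt D : ℂ) with hs
  set m : ℤ := ((i:ℕ):ℤ) + ((j:ℕ):ℤ) with hm
  set F : ℤ → ℂ := fun x =>
    s ^ 3 * τ ^ (-2*a*c + b*c^2 + 2*(a - b*c)*x + b*x^2) * ω ^ (x * m) with hF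
  have hFper : ∀ x : ℤ, F (x + D) = F x := by
    intro x
    simp only [hF]
    rw [show -2*a*c + b*c^2 + 2*(a - b*c)*(x + D) + b*(x + D)^2
        = (-2*a*c + b*c^2 + 2*(a - b*c)*x + b*x^2) + (2*(D:ℤ)) * (a - b*c + b*x)
          + ((D:ℤ)*(D:ℤ)) * b by ring]
    rw [show (x + (D:ℤ)) * m = x * m + (D:ℤ) * m by ring]
    rw [zpow_add₀ hτ0, zpow_add₀ hτ0, zpow_add₀ hω0, zpow_mul τ (2*(D:ℤ)),
      zpow_mul τ ((D:ℤ)*(D:ℤ)), zpow_mul ω (D:ℤ), hτ2D, hτD2, hωD, one_zpow, one_zpow, one_zpow]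
    ring
  simp only [R, ket, bra, Matrix.mul_diagonal, Matrix.diagonal_mul, Matrix.smul_apply,
    Matrix.sum_apply, Matrix.vecMulVec_apply, smul_eq_mul, neg_mul, neg_neg, ← hs]
  simp only [Finset.mul_sum, Finset.sum_mul]
  refine (Finset.sum_congr rfl fun x _ => ?_).trans
    ((sum_shift17 D F hFper c).trans (Finset.sum_congr rfl fun x _ => ?_))
  · simp only [hF]
    rw [show -2*a*c + b*c^2 + 2*(a - b*c)*((x:ℤ) + c) + b*((x:ℤ) + c)^2
        = 2*a*(x:ℤ) + b*(x:ℤ)^2 by ring]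
    rw [show ((x:ℤ) + c) * m = c * ((i:ℕ):ℤ) + ((x:ℤ) * ((i:ℕ):ℤ) + ((x:ℤ) * ((j:ℕ):ℤ)
        + c * ((j:ℕ):ℤ))) by rw [hm]; ring]
    rw [zpow_add₀ hω0, zpow_add₀ hω0, zpow_add₀ hω0]
    ring
  · simp only [hF]
    rw [show -2*a*c + b*c^2 + 2*(a - b*c)*(x:ℤ) + b*(x:ℤ)^2
        = (-2*a*c + b*c^2) + (2*(a - b*c)*(x:ℤ) + b*(x:ℤ)^2) by ring]
    rw [show (x:ℤ) * m = (x:ℤ) * ((i:ℕ):ℤ) + (x:ℤ) * ((j:ℕ):ℤ) by rw [hm]; ring]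
    rw [zpow_add₀ hτ0, zpow_add₀ hω0]
    ring
end
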